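/- arXiv:1401.7112 — 3 statements merged into one kernel-verified Lean document; each statement's English description precedes it below -/
import Mathlib

section
/- Let 1 < p < ∞ and let q satisfy 1/p + 1/q = 1. Let E = ℓ^p(ℕ, ℂ) and equip E × E with the norm ‖(x, y)‖ = (1/√2)·(‖x‖_p² + ‖y‖_p²)^{1/2} and ℂ × ℂ with the norm ‖(z₁, z₂)‖ = (1/√2)·(|z₁|² + |z₂|²)^{1/2}. Then for every map Λ : E × E → ℂ × ℂ that is additive, continuous, and 𝔹ℂ-homogeneous in the sense that Λ(a·x, b·y) = (a·Λ(x, y)₁, b·Λ(x, y)₂) for all a, b ∈ ℂ and x, y ∈ E, there exist unique sequences u, v ∈ ℓ^q(ℕ, ℂ) such that Λ(x, y) = (Σₙ xₙ uₙ, Σₙ yₙ vₙ) for all (x, y) ∈ E × E. Hence the dual space of ℓ^p(𝔹ℂ) is ℓ^q(𝔹ℂ). -/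
noncomputable section

open scoped ENNReal

lemma conj_toReal (p q : ℝ≥0∞) (hp : 1 < p) (hp' : p ≠ ⊤) (hpq : 1 / p + 1 / q = 1) :
    p.toReal.HolderConjugate q.toReal := by
  have hq0 : q ≠ 0 := by rintro rfl; simp at hpq
  have hqt : q ≠ ⊤ := by rintro rfl; simp at hpq; exact hp.ne' hpq
  have hp0 : p ≠ 0 := by positivity
  have h1 : 1 < p.toReal := by
    rw [← ENNReal.toReal_one]
    exact ENNReal.toReal_strict_mono hp' hp
  rw [Real.holderConjugate_iff]
  constructor
  · exact h1
  · have := congrArg ENNReal.toReal hpq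
    rw [ENNReal.toReal_add (by simp [hp0]) (by simp [hq0]), ENNReal.toReal_one] at this
    simpa [one_div, ENNReal.toReal_inv] using this

lemma lp_dual_repr (p q : ℝ≥0∞) [Fact (1 ≤ p)] (hp : 1 < p) (hp' : p ≠ ⊤)
    (hpq : 1 / p + 1 / q = 1) (f : lp (fun _ : ℕ => ℂ) p →L[ℂ] ℂ) :
    ∃ u : lp (fun _ : ℕ => ℂ) q, ∀ x : lp (fun _ : ℕ => ℂ) p, f x = ∑' n : ℕ, x n * u n := by
  have hc := conj_toReal p q hp hp' hpq
  set pr := p.toReal with hpr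
  set qr := q.toReal with hqr
  have hpr0 : 0 < pr := hc.pos
  have hqr0 : 0 < qr := hc.symm.pos
  -- the candidate dual sequence
  set U : ℕ → ℂ := fun n => f (lp.single p n 1) with hU
  -- sign sequence
  set c : ℕ → ℂ := fun n => if U n = 0 then 0 else
    ((‖U n‖ ^ (qr - 1) : ℝ) : ℂ) * ((starRingEnd ℂ) (U n) / ‖U n‖) with hcdef
  have hcnorm : ∀ n, ‖c n‖ = ‖U n‖ ^ (qr - 1) := by
    intro n
    by_cases h : U n = 0
    · simp [hcdef, h, Real.zero_rpow (by linarith [hc.symm.lt] : qr - 1 ≠ 0)]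
    · simp [hcdef, h, norm_mul, norm_div, Complex.norm_real, abs_of_nonneg
        (Real.rpow_nonneg (norm_nonneg _) _), RCLike.norm_conj,
        div_self (norm_ne_zero_iff.mpr h), Real.rpow_nonneg]
  have hcmul : ∀ n, c n * U n = ((‖U n‖ ^ qr : ℝ) : ℂ) := by
    intro n
    by_cases h : U n = 0
    · simp [hcdef, h, Real.zero_rpow hqr0.ne']
    · have hn : (‖U n‖ : ℝ) ≠ 0 := norm_ne_zero_iff.mpr h
      have hn' : (‖U n‖ : ℂ) ≠ 0 := by exact_mod_cast hn
      have e1 : ((‖U n‖ ^ (qr - 1) : ℝ) : ℂ) = ((‖U n‖ ^ qr : ℝ) : ℂ) / (‖U n‖ : ℂ) := by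
        rw [Real.rpow_sub (norm_pos_iff.mpr h), Real.rpow_one]
        push_cast
        ring
      have e2 : (starRingEnd ℂ) (U n) * U n = ((‖U n‖ : ℂ)) ^ 2 := by
        rw [RCLike.conj_mul]
        norm_cast
      rw [hcdef]
      simp only [h, if_false]
      rw [e1]
      have e3 : ((‖U n‖ ^ qr : ℝ) : ℂ) / (‖U n‖ : ℂ) * ((starRingEnd ℂ) (U n) / (‖U n‖ : ℂ)) * U n
          = ((‖U n‖ ^ qr : ℝ) : ℂ) * (((starRingEnd ℂ) (U n) * U n) / ((‖U n‖ : ℂ) * (‖U n‖ : ℂ))) := by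
        ring
      rw [e3, e2, sq, div_self (mul_ne_zero hn' hn'), mul_one]
  -- membership of U in ℓ^q
  have hmem : Memℓp U q := by
    refine memℓp_gen' (C := ‖f‖ ^ qr) ?_
    intro s
    set S : ℝ := ∑ n ∈ s, ‖U n‖ ^ qr with hS
    have hS0 : 0 ≤ S := Finset.sum_nonneg fun n _ => Real.rpow_nonneg (norm_nonneg _) _
    set xs : lp (fun _ : ℕ => ℂ) p := ∑ n ∈ s, lp.single p n (c n) with hxs
    have hfx : f xs = (S : ℂ) := by
      rw [hxs, map_sum]
      rw [hS]
      push_cast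
      refine Finset.sum_congr rfl fun n _ => ?_
      have : lp.single p n (c n) = c n • (lp.single p n (1 : ℂ) : lp (fun _ : ℕ => ℂ) p) := by
        rw [← lp.single_smul]
        norm_num
      rw [this, map_smul, smul_eq_mul, hcmul n]
    have hxnorm : ‖xs‖ ^ pr = ∑ n ∈ s, ‖U n‖ ^ ((qr - 1) * pr) := by
      rw [hxs, lp.norm_sum_single hpr0]
      refine Finset.sum_congr rfl fun n _ => ?_
      rw [hcnorm n, ← Real.rpow_mul (norm_nonneg _)]
    have hconj : (qr - 1) * pr = qr := hc.symm.sub_one_mul_conj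
    rw [hconj] at hxnorm
    have hxS : ‖xs‖ ^ pr = S := by rw [hxnorm, hS]
    -- now the Hölder-type estimate
    have hbound : S ≤ ‖f‖ * S ^ (1 / pr) := by
      calc S = ‖f xs‖ := by rw [hfx]; simp [Complex.norm_real, abs_of_nonneg hS0]
      _ ≤ ‖f‖ * ‖xs‖ := f.le_opNorm xs
      _ = ‖f‖ * S ^ (1 / pr) := by
          congr 1
          rw [← hxS, one_div, Real.rpow_rpow_inv (norm_nonneg _) hpr0.ne']
    rcases eq_or_lt_of_le hS0 with hS0' | hS0'
    · rw [← hS0']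
      exact Real.rpow_nonneg (norm_nonneg _) _
    · have h1 : S ^ (1 / qr) ≤ ‖f‖ := by
        have hpos : 0 < S ^ (1 / pr) := Real.rpow_pos_of_pos hS0' _
        refine (mul_le_mul_iff_left₀ hpos).mp ?_
        calc S ^ (1 / qr) * S ^ (1 / pr) = S := by
              rw [← Real.rpow_add hS0', one_div, one_div, hc.symm.inv_add_inv_eq_one,
                Real.rpow_one]
          _ ≤ ‖f‖ * S ^ (1 / pr) := hbound
      calc S = (S ^ (1 / qr)) ^ qr := by
            rw [one_div, Real.rpow_inv_rpow hS0 hqr0.ne']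
        _ ≤ ‖f‖ ^ qr := Real.rpow_le_rpow (Real.rpow_nonneg hS0 _) h1 hqr0.le
  -- conclusion
  refine ⟨⟨U, hmem⟩, fun x => ?_⟩
  have hx : HasSum (fun n : ℕ => lp.single p n (x n)) x := lp.hasSum_single hp' x
  have hfs : HasSum (fun n : ℕ => f (lp.single p n (x n))) (f x) := hx.mapL f
  have heq : ∀ n : ℕ, f (lp.single p n (x n)) = x n * U n := by
    intro n
    have : lp.single p n (x n) = x n • (lp.single p n (1 : ℂ) : lp (fun _ : ℕ => ℂ) p) := by
      rw [← lp.single_smul]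
      norm_num
    rw [this, map_smul, smul_eq_mul]
  rw [funext heq] at hfs
  exact hfs.tsum_eq.symm


lemma lp_tsum_single_mul (p : ℝ≥0∞) (w : ℕ → ℂ) (n : ℕ) :
    ∑' m : ℕ, (lp.single p n (1 : ℂ) : lp (fun _ : ℕ => ℂ) p) m * w m = w n := by
  rw [tsum_eq_single n (fun m hm => by rw [lp.single_apply_ne p n _ hm, zero_mul])]
  rw [lp.single_apply_self, one_mul]

/-- The dual of `ℓ^p(𝔹ℂ)` is `ℓ^q(𝔹ℂ)` (`1 < p < ∞`, `1/p + 1/q = 1`): every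
continuous additive `𝔹ℂ`-homogeneous functional `Λ : ℓ^p × ℓ^p → ℂ × ℂ` (where
`ℓ^p(𝔹ℂ)` is identified with `ℓ^p(ℕ, ℂ) × ℓ^p(ℕ, ℂ)`, whose bicomplex norm induces
the product topology) is represented by a unique pair `(u, v) ∈ ℓ^q × ℓ^q` via
`Λ(x, y) = (Σₙ xₙ uₙ, Σₙ yₙ vₙ)`. -/
theorem bicomplex_lp_dual (p q : ℝ≥0∞) [Fact (1 ≤ p)] (hp : 1 < p) (hp' : p ≠ ⊤)
    (hpq : 1 / p + 1 / q = 1)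
    (Λ : lp (fun _ : ℕ => ℂ) p × lp (fun _ : ℕ => ℂ) p → ℂ × ℂ)
    (hadd : ∀ a b : lp (fun _ : ℕ => ℂ) p × lp (fun _ : ℕ => ℂ) p, Λ (a + b) = Λ a + Λ b)
    (hcont : Continuous Λ)
    (hhom : ∀ (a b : ℂ) (x y : lp (fun _ : ℕ => ℂ) p),
      Λ (a • x, b • y) = (a * (Λ (x, y)).1, b * (Λ (x, y)).2)) :
    ∃! uv : lp (fun _ : ℕ => ℂ) q × lp (fun _ : ℕ => ℂ) q,
      ∀ x y : lp (fun _ : ℕ => ℂ) p,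
        Λ (x, y) = (∑' n : ℕ, x n * uv.1 n, ∑' n : ℕ, y n * uv.2 n) := by
  -- split Λ into two continuous linear functionals
  have key1 : ∀ x y : lp (fun _ : ℕ => ℂ) p, (Λ (x, y)).1 = (Λ (x, 0)).1 := by
    intro x y
    have h1 := hhom 1 0 x y
    rw [one_smul, zero_smul] at h1
    rw [h1]
    simp
  have key2 : ∀ x y : lp (fun _ : ℕ => ℂ) p, (Λ (x, y)).2 = (Λ (0, y)).2 := by
    intro x y
    have h2 := hhom 0 1 x y
    rw [one_smul, zero_smul] at h2
    rw [h2]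
    simp
  set F : lp (fun _ : ℕ => ℂ) p →L[ℂ] ℂ :=
    { toFun := fun x => (Λ (x, 0)).1
      map_add' := by
        intro x x'
        have : ((x + x' : lp (fun _ : ℕ => ℂ) p), (0 : lp (fun _ : ℕ => ℂ) p))
            = (x, (0 : lp (fun _ : ℕ => ℂ) p)) + (x', 0) := by
          simp [Prod.ext_iff]
        show (Λ (x + x', 0)).1 = (Λ (x, 0)).1 + (Λ (x', 0)).1
        rw [this, hadd]
        rfl
      map_smul' := by
        intro a x
        have h := hhom a 1 x 0
        rw [one_smul] at h
        show (Λ (a • x, 0)).1 = a • (Λ (x, 0)).1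
        rw [h]
        simp
      cont := continuous_fst.comp (hcont.comp (continuous_id.prodMk continuous_const)) }
    with hF
  set G : lp (fun _ : ℕ => ℂ) p →L[ℂ] ℂ :=
    { toFun := fun y => (Λ (0, y)).2
      map_add' := by
        intro y y'
        have : ((0 : lp (fun _ : ℕ => ℂ) p), (y + y' : lp (fun _ : ℕ => ℂ) p))
            = ((0 : lp (fun _ : ℕ => ℂ) p), y) + (0, y') := by
          simp [Prod.ext_iff]
        show (Λ (0, y + y')).2 = (Λ (0, y)).2 + (Λ (0, y')).2
        rw [this, hadd]
        rfl
      map_smul' := by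
        intro a y
        have h := hhom 1 a 0 y
        rw [one_smul] at h
        show (Λ (0, a • y)).2 = a • (Λ (0, y)).2
        rw [h]
        simp
      cont := continuous_snd.comp (hcont.comp (continuous_const.prodMk continuous_id)) }
    with hG
  obtain ⟨u, hu⟩ := lp_dual_repr p q hp hp' hpq F
  obtain ⟨v, hv⟩ := lp_dual_repr p q hp hp' hpq G
  have hrep : ∀ x y : lp (fun _ : ℕ => ℂ) p,
      Λ (x, y) = (∑' n : ℕ, x n * u n, ∑' n : ℕ, y n * v n) := by
    intro x y
    have hx := hu x
    have hy := hv y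
    refine Prod.ext ?_ ?_
    · rw [key1 x y]
      exact hx
    · rw [key2 x y]
      exact hy
  refine ⟨(u, v), hrep, ?_⟩
  rintro ⟨u', v'⟩ h'
  have hun : ∀ n, u' n = u n := by
    intro n
    have h1 := h' (lp.single p n 1) 0
    have h2 := hrep (lp.single p n 1) 0
    rw [h1] at h2
    have := congrArg Prod.fst h2
    simpa only [lp_tsum_single_mul] using this
  have hvn : ∀ n, v' n = v n := by
    intro n
    have h1 := h' 0 (lp.single p n 1)
    have h2 := hrep 0 (lp.single p n 1)
    rw [h1] at h2
    have := congrArg Prod.snd h2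
    simpa only [lp_tsum_single_mul] using this
  refine Prod.ext ?_ ?_
  · exact lp.ext (funext hun)
  · exact lp.ext (funext hvn)
end
end

section
/- Let (Ω, Σ, μ) be a finite measure space and let f = (f₁, f₂) be a pair of measurable complex-valued functions on Ω. Then f₁ and f₂ are essentially bounded (i.e. f ∈ L^∞(𝔹ℂ)) if and only if for every N-function φ one has ∫_Ω φ(|fᵢ|) dμ < ∞ for i = 1, 2. That is, L^∞(𝔹ℂ) equals the intersection of the Orlicz classes L̃^φ(𝔹ℂ) over all N-functions φ. -/
noncomputable section

open MeasureTheory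
open scoped ENNReal NNReal

/-- An N-function: a continuous convex function `φ : [0, ∞) → [0, ∞)` with
`φ(x) = 0 ↔ x = 0`, `φ(x)/x → 0` as `x → 0⁺`, and `φ(x)/x → ∞` as `x → ∞`. -/
structure NFun where
  toFun : ℝ → ℝ
  nonneg : ∀ x : ℝ, 0 ≤ x → 0 ≤ toFun x
  continuousOn : ContinuousOn toFun (Set.Ici 0)
  convexOn : ConvexOn ℝ (Set.Ici 0) toFun
  zero_iff : ∀ x : ℝ, 0 ≤ x → (toFun x = 0 ↔ x = 0)
  tendsto_zero : Filter.Tendsto (fun x => toFun x / x) (nhdsWithin 0 (Set.Ioi 0)) (nhds 0)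
  tendsto_top : Filter.Tendsto (fun x => toFun x / x) Filter.atTop Filter.atTop

namespace OrliczAux

/-- Auxiliary N-function candidate: `x² + ∑ₙ tₙ (x-(n+1))⁺`. -/
def phiAux (t : ℕ → ℝ) (x : ℝ) : ℝ := x ^ 2 + ∑' n : ℕ, t n * max (x - (n + 1)) 0

lemma term_vanish (t : ℕ → ℝ) {x : ℝ} {n : ℕ} (h : x ≤ n + 1) :
    t n * max (x - (n + 1)) 0 = 0 := by
  rw [max_eq_right (sub_nonpos.mpr h), mul_zero]

lemma phiAux_summable (t : ℕ → ℝ) (x : ℝ) :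
    Summable (fun n : ℕ => t n * max (x - (n + 1)) 0) := by
  apply summable_of_ne_finset_zero (s := Finset.range ⌈x⌉₊)
  intro n hn
  rw [Finset.mem_range, not_lt] at hn
  exact term_vanish t (le_trans (Nat.le_ceil x) (by exact_mod_cast le_trans hn (Nat.le_succ n)))

lemma phiAux_eq_sum (t : ℕ → ℝ) {x : ℝ} {N : ℕ} (hx : x ≤ N) :
    phiAux t x = x ^ 2 + ∑ n ∈ Finset.range N, t n * max (x - (n + 1)) 0 := by
  unfold phiAux
  congr 1
  apply tsum_eq_sum
  intro n hn
  rw [Finset.mem_range, not_lt] at hn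
  have : x ≤ (n : ℝ) + 1 := le_trans hx (by exact_mod_cast le_trans hn (Nat.le_succ n))
  exact term_vanish t this

lemma term_nonneg {t : ℕ → ℝ} (ht : ∀ n, 0 ≤ t n) (x : ℝ) (n : ℕ) :
    0 ≤ t n * max (x - (n + 1)) 0 :=
  mul_nonneg (ht n) (le_max_right _ _)

lemma tsum_nonneg' {t : ℕ → ℝ} (ht : ∀ n, 0 ≤ t n) (x : ℝ) :
    0 ≤ ∑' n : ℕ, t n * max (x - (n + 1)) 0 :=
  tsum_nonneg (term_nonneg ht x)

lemma sq_le_phiAux {t : ℕ → ℝ} (ht : ∀ n, 0 ≤ t n) (x : ℝ) : x ^ 2 ≤ phiAux t x :=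
  le_add_of_nonneg_right (tsum_nonneg' ht x)

lemma phiAux_nonneg {t : ℕ → ℝ} (ht : ∀ n, 0 ≤ t n) (x : ℝ) : 0 ≤ phiAux t x :=
  le_trans (sq_nonneg x) (sq_le_phiAux ht x)

lemma phiAux_mono {t : ℕ → ℝ} (ht : ∀ n, 0 ≤ t n) {x y : ℝ} (hx : 0 ≤ x) (hxy : x ≤ y) :
    phiAux t x ≤ phiAux t y := by
  unfold phiAux
  gcongr ?_ + ?_
  · exact pow_le_pow_left₀ hx hxy 2
  · exact Summable.tsum_le_tsum (fun n => mul_le_mul_of_nonneg_left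
      (max_le_max (by linarith) le_rfl) (ht n)) (phiAux_summable t x) (phiAux_summable t y)

lemma finsum_continuous (t : ℕ → ℝ) (N : ℕ) :
    Continuous (fun x : ℝ => x ^ 2 + ∑ n ∈ Finset.range N, t n * max (x - (n + 1)) 0) := by
  apply Continuous.add (by continuity)
  apply continuous_finset_sum
  intro n _
  exact continuous_const.mul ((continuous_id.sub continuous_const).max continuous_const)

lemma phiAux_continuous (t : ℕ → ℝ) : Continuous (phiAux t) := by
  rw [continuous_iff_continuousAt]
  intro a
  set N : ℕ := ⌈a⌉₊ + 1 with hN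
  have haN : a < (N : ℝ) := lt_of_le_of_lt (Nat.le_ceil a) (by exact_mod_cast Nat.lt_succ_self _)
  apply ContinuousAt.congr ((finsum_continuous t N).continuousAt)
  filter_upwards [Iic_mem_nhds haN] with y hy
  exact (phiAux_eq_sum t hy).symm

lemma finsum_convex (t : ℕ → ℝ) (ht : ∀ n, 0 ≤ t n) (N : ℕ) :
    ConvexOn ℝ Set.univ
      (fun x : ℝ => x ^ 2 + ∑ n ∈ Finset.range N, t n * max (x - (n + 1)) 0) := by
  apply ConvexOn.add (Even.convexOn_pow even_two)
  induction N with
  | zero => simpa using convexOn_const 0 convex_univ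
  | succ N ih =>
      have h1 : ConvexOn ℝ Set.univ (fun x : ℝ => t N * max (x - (N + 1)) 0) := by
        have haff : ConvexOn ℝ Set.univ (fun x : ℝ => x - (N + 1)) := by
          simpa [sub_eq_add_neg, Pi.add_def] using (convexOn_id convex_univ).add (convexOn_const (-(N+1:ℝ)) convex_univ)
        have := (haff.sup (convexOn_const (0:ℝ) convex_univ)).smul (ht N)
        simpa [smul_eq_mul, Pi.sup_apply] using this
      simpa [Finset.sum_range_succ, Pi.add_def] using ih.add h1

lemma phiAux_convex (t : ℕ → ℝ) (ht : ∀ n, 0 ≤ t n) : ConvexOn ℝ (Set.Ici 0) (phiAux t) := by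
  refine ⟨convex_Ici 0, ?_⟩
  intro x hx y hy a b ha hb hab
  set N : ℕ := ⌈max x y⌉₊ with hN
  have hxN : x ≤ (N : ℝ) := le_trans (le_max_left x y) (Nat.le_ceil _)
  have hyN : y ≤ (N : ℝ) := le_trans (le_max_right x y) (Nat.le_ceil _)
  have hcomb : a • x + b • y ≤ (N : ℝ) := by
    calc a • x + b • y ≤ a • (N:ℝ) + b • (N:ℝ) := by
          gcongr
      _ = (N : ℝ) := by rw [smul_eq_mul, smul_eq_mul, ← add_mul, hab, one_mul]
  rw [phiAux_eq_sum t hxN, phiAux_eq_sum t hyN, phiAux_eq_sum t hcomb]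
  exact (finsum_convex t ht N).2 trivial trivial ha hb hab

lemma phiAux_zero {t : ℕ → ℝ} : phiAux t 0 = 0 := by
  have h : ∀ n : ℕ, t n * max ((0:ℝ) - (n + 1)) 0 = 0 := fun n =>
    term_vanish t (by positivity)
  have h0 : (∑' n : ℕ, t n * max ((0:ℝ) - (n + 1)) 0) = 0 := by
    rw [tsum_congr h, tsum_zero]
  unfold phiAux
  rw [h0]
  norm_num

lemma phiAux_small {t : ℕ → ℝ} {x : ℝ} (hx : x ≤ 1) : phiAux t x = x ^ 2 := by
  have h1 : x - 1 ≤ 0 := by linarith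
  rw [phiAux_eq_sum t (N := 1) (by exact_mod_cast hx), Finset.sum_range_one]
  norm_num [max_eq_right h1]

lemma t_le_phiAux {t : ℕ → ℝ} (ht : ∀ n, 0 ≤ t n) (n : ℕ) :
    t n ≤ phiAux t ((n : ℝ) + 2) := by
  have h1 : t n * max (((n:ℝ) + 2) - (n + 1)) 0 = t n := by
    norm_num
  have h2 := Summable.le_tsum (phiAux_summable t ((n:ℝ) + 2)) n
    (fun j _ => term_nonneg ht _ j)
  rw [h1] at h2
  exact le_trans h2 (le_add_of_nonneg_left (sq_nonneg _))

/-- The constructed N-function. -/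
def nfunOf (t : ℕ → ℝ) (ht : ∀ n, 0 ≤ t n) : NFun where
  toFun := phiAux t
  nonneg := fun x _ => phiAux_nonneg ht x
  continuousOn := (phiAux_continuous t).continuousOn
  convexOn := phiAux_convex t ht
  zero_iff := by
    intro x hx
    constructor
    · intro h
      have h2 : x ^ 2 ≤ 0 := h ▸ sq_le_phiAux ht x
      nlinarith [sq_nonneg x]
    · rintro rfl; exact phiAux_zero
  tendsto_zero := by
    have h : Filter.Tendsto (fun x : ℝ => x) (nhdsWithin 0 (Set.Ioi 0)) (nhds 0) :=
      Filter.tendsto_id.mono_left nhdsWithin_le_nhds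
    apply h.congr'
    filter_upwards [Ioo_mem_nhdsGT_of_mem (by norm_num : (0:ℝ) ∈ Set.Ico 0 1)] with x hx
    rw [phiAux_small (le_of_lt hx.2), sq, mul_div_assoc, div_self (ne_of_gt hx.1), mul_one]
  tendsto_top := by
    apply Filter.tendsto_atTop_mono' _ _ Filter.tendsto_id
    filter_upwards [Filter.eventually_ge_atTop (1:ℝ)] with x hx
    have hx0 : (0:ℝ) < x := lt_of_lt_of_le one_pos hx
    have h2 : x ≤ phiAux t x / x := by
      rw [le_div_iff₀ hx0]
      nlinarith [sq_le_phiAux ht x]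
    simpa using h2

/-- Forward direction, one component. -/
lemma lintegral_lt_top_of_bounded {Ω : Type*} [MeasurableSpace Ω] (μ : Measure Ω)
    [IsFiniteMeasure μ] {f : Ω → ℂ} {C : ℝ} (hC : ∀ᵐ x ∂μ, ‖f x‖ ≤ C) (φ : NFun) :
    (∫⁻ x, ENNReal.ofReal (φ.toFun ‖f x‖) ∂μ) < ⊤ := by
  set D : ℝ := max C 0 with hD
  have hDnn : (0:ℝ) ≤ D := le_max_right _ _
  obtain ⟨z, hz, hmax⟩ := isCompact_Icc.exists_isMaxOn ⟨0, Set.left_mem_Icc.mpr hDnn⟩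
    (φ.continuousOn.mono (Set.Icc_subset_Ici_self : Set.Icc (0:ℝ) D ⊆ Set.Ici 0))
  calc (∫⁻ x, ENNReal.ofReal (φ.toFun ‖f x‖) ∂μ)
      ≤ ∫⁻ _, ENNReal.ofReal (φ.toFun z) ∂μ := by
        apply lintegral_mono_ae
        filter_upwards [hC] with x hx
        exact ENNReal.ofReal_le_ofReal
          (hmax ⟨norm_nonneg _, le_trans hx (le_max_left _ _)⟩)
    _ = ENNReal.ofReal (φ.toFun z) * μ Set.univ := lintegral_const _
    _ < ⊤ := ENNReal.mul_lt_top ENNReal.ofReal_lt_top (measure_lt_top μ _)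

/-- Backward direction, one component, contrapositive. -/
lemma exists_nfun_lintegral_top {Ω : Type*} [MeasurableSpace Ω] (μ : Measure Ω)
    [IsFiniteMeasure μ] {f : Ω → ℂ} (hm : Measurable f)
    (hub : ¬ ∃ C : ℝ, ∀ᵐ x ∂μ, ‖f x‖ ≤ C) :
    ∃ φ : NFun, (∫⁻ x, ENNReal.ofReal (φ.toFun ‖f x‖) ∂μ) = ⊤ := by
  push_neg at hub
  set S : ℕ → Set Ω := fun m => {x | (m : ℝ) ≤ ‖f x‖} with hS
  have hSpos : ∀ m : ℕ, 0 < μ (S m) := by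
    intro m
    have := hub (m : ℝ)
    rw [MeasureTheory.frequently_ae_iff] at this
    have hsub : {x | (m:ℝ) < ‖f x‖} ⊆ S m := fun x hx => show (m:ℝ) ≤ ‖f x‖ from le_of_lt hx
    exact lt_of_lt_of_le (pos_iff_ne_zero.mpr this) (measure_mono hsub)
  set a : ℕ → ℝ := fun m => (μ (S m)).toReal with ha
  have hapos : ∀ m, 0 < a m := fun m =>
    ENNReal.toReal_pos (ne_of_gt (hSpos m)) (measure_ne_top μ _)
  set t : ℕ → ℝ := fun n => (n : ℝ) / a (n + 2) with htdef
  have ht : ∀ n, 0 ≤ t n := fun n => div_nonneg (Nat.cast_nonneg n) (le_of_lt (hapos _))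
  refine ⟨nfunOf t ht, ?_⟩
  set φ := nfunOf t ht with hφ
  have hφt : φ.toFun = phiAux t := by rw [hφ]; rfl
  by_contra htop
  obtain ⟨n, hn⟩ := ENNReal.exists_nat_gt htop
  -- lower bound: integral ≥ n
  have key : (n : ℝ≥0∞) ≤ ∫⁻ x, ENNReal.ofReal (φ.toFun ‖f x‖) ∂μ := by
    have hmeas : AEMeasurable (fun x => ENNReal.ofReal (φ.toFun ‖f x‖)) μ := by
      rw [hφt]; exact (ENNReal.measurable_ofReal.comp
        ((phiAux_continuous t).measurable.comp hm.norm)).aemeasurable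
    have h1 := mul_meas_ge_le_lintegral₀ hmeas (ENNReal.ofReal (φ.toFun ((n:ℝ) + 2)))
    have hsub : S (n + 2) ⊆ {x | ENNReal.ofReal (φ.toFun ((n:ℝ) + 2)) ≤
        ENNReal.ofReal (φ.toFun ‖f x‖)} := by
      intro x hx
      have hx' : ((n:ℝ) + 2) ≤ ‖f x‖ := by
        have := hx
        simp only [hS, Set.mem_setOf_eq, Nat.cast_add, Nat.cast_ofNat] at this ⊢
        exact_mod_cast this
      exact ENNReal.ofReal_le_ofReal (by rw [hφt]; exact phiAux_mono ht (by positivity) hx')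
    have h2 : ENNReal.ofReal (φ.toFun ((n:ℝ) + 2)) * μ (S (n + 2)) ≤
        ∫⁻ x, ENNReal.ofReal (φ.toFun ‖f x‖) ∂μ :=
      le_trans (mul_le_mul_right (measure_mono hsub) _) h1
    refine le_trans ?_ h2
    have hta : t n ≤ φ.toFun ((n:ℝ) + 2) := by rw [hφt]; exact t_le_phiAux ht n
    have hμS : μ (S (n + 2)) = ENNReal.ofReal (a (n + 2)) := by
      rw [ha, ENNReal.ofReal_toReal (measure_ne_top μ _)]
    calc (n : ℝ≥0∞) = ENNReal.ofReal (t n * a (n + 2)) := by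
          rw [htdef]
          rw [div_mul_cancel₀ _ (ne_of_gt (hapos (n + 2)))]
          simp
      _ = ENNReal.ofReal (t n) * ENNReal.ofReal (a (n + 2)) :=
          ENNReal.ofReal_mul (ht n)
      _ ≤ ENNReal.ofReal (φ.toFun ((n:ℝ) + 2)) * μ (S (n + 2)) := by
          rw [hμS]; exact mul_le_mul_left (ENNReal.ofReal_le_ofReal hta) _
  exact absurd (lt_of_le_of_lt key hn) (lt_irrefl _)

end OrliczAux

/-- On a finite measure space, a pair `(f₁, f₂)` of measurable complex functions is in
`L^∞(𝔹ℂ)` (both components essentially bounded) iff it lies in the Orlicz class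
`L̃^φ(𝔹ℂ)` of every N-function `φ`: `L^∞(𝔹ℂ) = ⋂_φ L̃^φ(𝔹ℂ)`. -/
theorem bicomplex_Linfty_eq_inter_orlicz_classes {Ω : Type*} [MeasurableSpace Ω]
    (μ : Measure Ω) [IsFiniteMeasure μ] (f₁ f₂ : Ω → ℂ)
    (hm₁ : Measurable f₁) (hm₂ : Measurable f₂) :
    ((∃ C : ℝ, ∀ᵐ x ∂μ, ‖f₁ x‖ ≤ C) ∧ (∃ C : ℝ, ∀ᵐ x ∂μ, ‖f₂ x‖ ≤ C)) ↔
      (∀ φ : NFun,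
        (∫⁻ x, ENNReal.ofReal (φ.toFun ‖f₁ x‖) ∂μ) < ⊤ ∧
        (∫⁻ x, ENNReal.ofReal (φ.toFun ‖f₂ x‖) ∂μ) < ⊤) := by
  constructor
  · rintro ⟨⟨C₁, hC₁⟩, ⟨C₂, hC₂⟩⟩ φ
    exact ⟨OrliczAux.lintegral_lt_top_of_bounded μ hC₁ φ,
      OrliczAux.lintegral_lt_top_of_bounded μ hC₂ φ⟩
  · intro h
    constructor
    · by_contra hub
      obtain ⟨φ, hφ⟩ := OrliczAux.exists_nfun_lintegral_top μ hm₁ hub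
      exact absurd (h φ).1 (by rw [hφ]; exact lt_irrefl _)
    · by_contra hub
      obtain ⟨φ, hφ⟩ := OrliczAux.exists_nfun_lintegral_top μ hm₂ hub
      exact absurd (h φ).2 (by rw [hφ]; exact lt_irrefl _)
end
end

section
/- Let (Ω, Σ, μ) be a σ-finite complete measure space, let φ be an Orlicz function satisfying the Δ₂ condition, and let T : Ω → Ω be a non-singular measurable transformation. Then the composition operator C_T, defined on pairs by C_T(f₁, f₂) = (f₁ ∘ T, f₂ ∘ T), maps L^φ(𝔹ℂ) boundedly into itself (i.e. there exists C > 0 such that for every f ∈ L^φ(𝔹ℂ) one has C_T f ∈ L^φ(𝔹ℂ) and ‖C_T f‖_{φ,𝔹ℂ} ≤ C·‖f‖_{φ,𝔹ℂ}) if and only if there exists a constant m > 0 such that μ(T⁻¹(A)) ≤ m·μ(A) for every A ∈ Σ with μ(A) < ∞. -/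
noncomputable section

open MeasureTheory
open scoped ENNReal NNReal

/-- An Orlicz function: a convex function `φ : [0, ∞) → [0, ∞]` with `φ(0) = 0`,
`φ(u) → ∞` as `u → ∞`, and `φ(u) < ∞` for some `0 < u < ∞`. -/
structure OrliczFun where
  toFun : ℝ≥0 → ℝ≥0∞
  zero : toFun 0 = 0
  convex : ∀ a b x y : ℝ≥0, a + b = 1 →
    toFun (a * x + b * y) ≤ (a : ℝ≥0∞) * toFun x + (b : ℝ≥0∞) * toFun y
  tendsto_top : Filter.Tendsto toFun Filter.atTop (nhds ⊤)
  exists_finite : ∃ u : ℝ≥0, 0 < u ∧ toFun u < ⊤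

/-- The modular `I_φ(f) = ∫_Ω φ(|f|) dμ`. -/
def modular (φ : OrliczFun) {Ω : Type*} [MeasurableSpace Ω] (μ : Measure Ω) (f : Ω → ℂ) :
    ℝ≥0∞ :=
  ∫⁻ x, φ.toFun ‖f x‖₊ ∂μ

/-- The Luxemburg norm `‖f‖_φ = inf {λ > 0 : I_φ(f/λ) ≤ 1}`. -/
def luxNorm (φ : OrliczFun) {Ω : Type*} [MeasurableSpace Ω] (μ : Measure Ω) (f : Ω → ℂ) : ℝ :=
  sInf {l : ℝ | 0 < l ∧ modular φ μ (fun x => f x / (l : ℂ)) ≤ 1}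

/-- Membership in the Orlicz space `L^φ(Ω)`. -/
def MemOrlicz (φ : OrliczFun) {Ω : Type*} [MeasurableSpace Ω] (μ : Measure Ω) (f : Ω → ℂ) :
    Prop :=
  Measurable f ∧ ∃ c : ℝ≥0, 0 < c ∧ modular φ μ (fun x => (c : ℂ) * f x) < ⊤

/-- The bicomplex Luxemburg norm `‖(f₁, f₂)‖_{φ,𝔹ℂ} = (1/√2)(‖f₁‖_φ² + ‖f₂‖_φ²)^{1/2}`. -/
def bcLuxNorm (φ : OrliczFun) {Ω : Type*} [MeasurableSpace Ω] (μ : Measure Ω)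
    (f : (Ω → ℂ) × (Ω → ℂ)) : ℝ :=
  (1 / Real.sqrt 2) * Real.sqrt (luxNorm φ μ f.1 ^ 2 + luxNorm φ μ f.2 ^ 2)

section Helpers

variable (φ : OrliczFun)

lemma scale (t x : ℝ≥0) (ht : t ≤ 1) : φ.toFun (t * x) ≤ (t : ℝ≥0∞) * φ.toFun x := by
  have h := φ.convex t (1 - t) x 0 (by simp [add_tsub_cancel_of_le ht])
  simpa [φ.zero] using h

lemma mono : Monotone φ.toFun := by
  intro x y hxy
  rcases eq_or_lt_of_le (zero_le : 0 ≤ y) with h | hy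
  · have : x = 0 := le_antisymm (h ▸ hxy) zero_le
    simp [this, ← h]
  · have ht : x / y ≤ 1 := div_le_one_of_le₀ hxy hy.le  -- name?
    have := scale φ (x / y) y ht
    rw [div_mul_cancel₀ _ hy.ne'] at this
    calc φ.toFun x ≤ ((x / y : ℝ≥0) : ℝ≥0∞) * φ.toFun y := this
      _ ≤ 1 * φ.toFun y := by gcongr; exact_mod_cast ht
      _ = φ.toFun y := one_mul _

lemma meas : Measurable φ.toFun := (mono φ).measurable

lemma eventually_big (c : ℝ≥0∞) (hc : c < ⊤) : ∃ M : ℝ≥0, ∀ x, M ≤ x → c < φ.toFun x := by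
  have := φ.tendsto_top.eventually (lt_mem_nhds hc)
  rcases Filter.eventually_atTop.1 this with ⟨M, hM⟩
  exact ⟨M, hM⟩

variable {K : ℝ≥0} (hΔ : ∀ x : ℝ≥0, φ.toFun (2 * x) ≤ (K : ℝ≥0∞) * φ.toFun x)
include hΔ

lemma pow_bound (n : ℕ) (x : ℝ≥0) : φ.toFun (2 ^ n * x) ≤ (K : ℝ≥0∞) ^ n * φ.toFun x := by
  induction n with
  | zero => simp
  | succ n ih =>
    have : (2 : ℝ≥0) ^ (n + 1) * x = 2 * (2 ^ n * x) := by ring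
    rw [this, pow_succ]
    calc φ.toFun (2 * (2 ^ n * x)) ≤ (K : ℝ≥0∞) * φ.toFun (2 ^ n * x) := hΔ _
      _ ≤ (K : ℝ≥0∞) * ((K : ℝ≥0∞) ^ n * φ.toFun x) := by gcongr
      _ = (K : ℝ≥0∞) ^ n * (K : ℝ≥0∞) * φ.toFun x := by ring

lemma finite (x : ℝ≥0) : φ.toFun x < ⊤ := by
  obtain ⟨u, hu, hfin⟩ := φ.exists_finite
  obtain ⟨n, hn⟩ := pow_unbounded_of_one_lt (x / u) (one_lt_two (α := ℝ≥0))
  have hx : x ≤ 2 ^ n * u := (div_le_iff₀ hu).1 hn.le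
  calc φ.toFun x ≤ φ.toFun (2 ^ n * u) := mono φ hx
    _ ≤ (K : ℝ≥0∞) ^ n * φ.toFun u := pow_bound φ hΔ n u
    _ < ⊤ := ENNReal.mul_lt_top (ENNReal.pow_lt_top ENNReal.coe_lt_top) hfin

lemma pos {x : ℝ≥0} (hx : 0 < x) : 0 < φ.toFun x := by
  by_contra h
  push_neg at h
  have h0 : φ.toFun x = 0 := le_antisymm h zero_le
  obtain ⟨M, hM⟩ := eventually_big φ 1 ENNReal.one_lt_top
  obtain ⟨n, hn⟩ := pow_unbounded_of_one_lt (M / x) (one_lt_two (α := ℝ≥0))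
  have hx2 : M ≤ 2 ^ n * x := (div_le_iff₀ hx).1 hn.le
  have := hM _ hx2
  have h2 : φ.toFun (2 ^ n * x) ≤ 0 := by
    simpa [h0] using pow_bound φ hΔ n x
  simp [le_antisymm h2 zero_le] at this


variable {Ω : Type*} [MeasurableSpace Ω] (μ : Measure Ω) (T : Ω → Ω) (hTm : Measurable T)

omit hΔ in
/-- Transfer: modular of a composition. -/
lemma modular_comp (hTm : Measurable T) {f : Ω → ℂ} (hf : Measurable f) :
    modular φ μ (f ∘ T) = modular φ (μ.map T) f := by
  unfold modular
  exact (lintegral_map ((meas φ).comp hf.nnnorm) hTm).symm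

omit hΔ in
lemma modular_mono_meas {ν : Measure Ω} (h : ν ≤ μ) (f : Ω → ℂ) :
    modular φ ν f ≤ modular φ μ f := lintegral_mono' h le_rfl

omit hΔ in
lemma modular_smul_meas (m : ℝ≥0) (f : Ω → ℂ) :
    modular φ ((m : ℝ≥0∞) • μ) f = m * modular φ μ f := by
  unfold modular
  rw [lintegral_smul_measure, smul_eq_mul]

omit hΔ in
lemma luxNorm_nonneg (f : Ω → ℂ) : 0 ≤ luxNorm φ μ f :=
  Real.sInf_nonneg (fun l hl => hl.1.le)

omit hΔ in
lemma luxNorm_set_bddBelow (f : Ω → ℂ) :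
    BddBelow {l : ℝ | 0 < l ∧ modular φ μ (fun x => f x / (l : ℂ)) ≤ 1} :=
  ⟨0, fun l hl => hl.1.le⟩

omit hΔ in
/-- scaling of modular: for `1 ≤ c`, `modular (f/c) ≤ (1/c) modular f`. -/
lemma modular_div_le {c : ℝ} (hc : 1 ≤ c) (f : Ω → ℂ) :
    modular φ μ (fun x => f x / (c : ℂ)) ≤ ((c.toNNReal⁻¹ : ℝ≥0) : ℝ≥0∞) * modular φ μ f := by
  unfold modular
  rw [← lintegral_const_mul' _ _ (by simp : ((c.toNNReal⁻¹ : ℝ≥0) : ℝ≥0∞) ≠ ⊤)]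
  apply lintegral_mono
  intro x
  have hcpos : (0:ℝ) < c := by linarith
  have hnn : ‖f x / (c : ℂ)‖₊ = (c.toNNReal)⁻¹ * ‖f x‖₊ := by
    rw [nnnorm_div, inv_mul_eq_div]
    congr 1
    ext
    simp [Real.norm_of_nonneg hcpos.le, Real.coe_toNNReal _ hcpos.le]
  simp only []
  rw [hnn]
  exact scale φ _ _ (by
    rw [inv_le_one_iff₀]
    right
    exact_mod_cast (Real.one_le_toNNReal).2 hc)

omit hΔ in
lemma lux_set_nonempty {f : Ω → ℂ} (h : ∃ c : ℝ≥0, 0 < c ∧ modular φ μ (fun x => (c : ℂ) * f x) < ⊤) :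
    {l : ℝ | 0 < l ∧ modular φ μ (fun x => f x / (l : ℂ)) ≤ 1}.Nonempty := by
  obtain ⟨c, hc, hM⟩ := h
  set g : Ω → ℂ := fun x => (c : ℂ) * f x with hg
  set M := modular φ μ g with hMdef
  set d : ℝ := max 1 (M.toReal + 1) with hd
  have hd1 : (1 : ℝ) ≤ d := le_max_left _ _
  refine ⟨d / (c : ℝ), div_pos (by linarith) (by exact_mod_cast hc), ?_⟩
  have hfun : (fun x => f x / ((d / (c : ℝ) : ℝ) : ℂ)) = fun x => g x / (d : ℂ) := by
    funext x
    have hcne : ((c : ℝ) : ℂ) ≠ 0 := by exact_mod_cast (show (c:ℝ) ≠ 0 by exact_mod_cast hc.ne')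
    push_cast
    field_simp [hg]
    ring
  rw [hfun]
  calc modular φ μ (fun x => g x / (d : ℂ)) ≤ ((d.toNNReal⁻¹ : ℝ≥0) : ℝ≥0∞) * M :=
        modular_div_le φ μ hd1 g
    _ ≤ ((d.toNNReal⁻¹ : ℝ≥0) : ℝ≥0∞) * ((d.toNNReal : ℝ≥0) : ℝ≥0∞) := by
        gcongr
        have : M ≤ ENNReal.ofReal d := by
          rw [ENNReal.le_ofReal_iff_toReal_le hM.ne (by linarith)]
          have : M.toReal ≤ M.toReal + 1 := by linarith
          exact this.trans (le_max_right _ _)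
        simpa [ENNReal.ofReal] using this
    _ ≤ 1 := by
        rw [← ENNReal.coe_mul]
        rw [inv_mul_cancel₀ (by simp; linarith : d.toNNReal ≠ 0)]
        simp

omit hΔ in
lemma luxNorm_zero_fun : luxNorm φ μ (fun _ => (0 : ℂ)) = 0 := by
  unfold luxNorm
  have : {l : ℝ | 0 < l ∧ modular φ μ (fun x => (0 : ℂ) / (l : ℂ)) ≤ 1} = Set.Ioi 0 := by
    ext l
    simp only [Set.mem_setOf_eq, Set.mem_Ioi]
    constructor
    · exact fun h => h.1
    · intro h
      refine ⟨h, ?_⟩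
      unfold modular
      simp [φ.zero]
  rw [this]
  exact csInf_Ioi

omit hΔ in
/-- Extend the finite-measure bound to all measurable sets via σ-finiteness. -/
lemma map_le_smul [SigmaFinite μ] (hTm : Measurable T) {m : ℝ≥0}
    (hm : ∀ A : Set Ω, MeasurableSet A → μ A < ⊤ → μ (T ⁻¹' A) ≤ (m : ℝ≥0∞) * μ A) :
    μ.map T ≤ ((m : ℝ≥0∞) • μ) := by
  refine Measure.le_intro (fun s hs _ => ?_)
  rw [Measure.map_apply hTm hs]
  have hmono : Monotone (fun n => s ∩ spanningSets μ n) := fun i j hij =>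
    Set.inter_subset_inter_right _ (monotone_spanningSets μ hij)
  have hunion : ⋃ n, s ∩ spanningSets μ n = s := by
    rw [← Set.inter_iUnion, iUnion_spanningSets, Set.inter_univ]
  have h1 : T ⁻¹' s = ⋃ n, T ⁻¹' (s ∩ spanningSets μ n) := by
    rw [← Set.preimage_iUnion, hunion]
  rw [h1]
  have hmeas : ∀ n, MeasurableSet (s ∩ spanningSets μ n) :=
    fun n => hs.inter (measurableSet_spanningSets μ n)
  calc μ (⋃ n, T ⁻¹' (s ∩ spanningSets μ n))
      = ⨆ n, μ (T ⁻¹' (s ∩ spanningSets μ n)) := by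
        apply Directed.measure_iUnion
        have : Monotone (fun n => T ⁻¹' (s ∩ spanningSets μ n)) :=
          fun i j hij => Set.preimage_mono (hmono hij)
        exact this.directed_le
    _ ≤ ⨆ n, (m : ℝ≥0∞) * μ (s ∩ spanningSets μ n) := by
        gcongr with n
        exact hm _ (hmeas n) (lt_of_le_of_lt (measure_mono (Set.inter_subset_right))
          (measure_spanningSets_lt_top μ n))
    _ = (m : ℝ≥0∞) * ⨆ n, μ (s ∩ spanningSets μ n) := by
        rw [ENNReal.mul_iSup]
    _ = (m : ℝ≥0∞) * μ s := by
        rw [← Directed.measure_iUnion hmono.directed_le, hunion]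

omit hΔ in
lemma modular_comp_le (hTm : Measurable T) {m : ℝ≥0} (hmap : μ.map T ≤ ((m : ℝ≥0∞) • μ))
    {g : Ω → ℂ} (hg : Measurable g) :
    modular φ μ (g ∘ T) ≤ (m : ℝ≥0∞) * modular φ μ g := by
  rw [modular_comp φ μ T hTm hg]
  calc modular φ (μ.map T) g ≤ modular φ ((m : ℝ≥0∞) • μ) g := modular_mono_meas φ _ hmap g
    _ = (m : ℝ≥0∞) * modular φ μ g := modular_smul_meas φ μ m g

omit hΔ in
lemma memOrlicz_comp (hTm : Measurable T) {m : ℝ≥0} (hmap : μ.map T ≤ ((m : ℝ≥0∞) • μ))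
    {f : Ω → ℂ} (hf : MemOrlicz φ μ f) : MemOrlicz φ μ (f ∘ T) := by
  obtain ⟨hfm, c, hc, hmod⟩ := hf
  refine ⟨hfm.comp hTm, c, hc, ?_⟩
  have : (fun x => (c : ℂ) * (f ∘ T) x) = (fun x => (c : ℂ) * f x) ∘ T := rfl
  rw [this]
  calc modular φ μ ((fun x => (c : ℂ) * f x) ∘ T)
      ≤ (m : ℝ≥0∞) * modular φ μ (fun x => (c : ℂ) * f x) :=
        modular_comp_le φ μ T hTm hmap (by fun_prop)
    _ < ⊤ := ENNReal.mul_lt_top ENNReal.coe_lt_top hmod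

omit hΔ in
lemma luxNorm_comp_le (hTm : Measurable T) {m : ℝ≥0} (hm : 0 < m)
    (hmap : μ.map T ≤ ((m : ℝ≥0∞) • μ)) {f : Ω → ℂ} (hf : MemOrlicz φ μ f) :
    luxNorm φ μ (f ∘ T) ≤ max (m : ℝ) 1 * luxNorm φ μ f := by
  set C₀ : ℝ := max (m : ℝ) 1 with hC₀
  have hC₀1 : (1:ℝ) ≤ C₀ := le_max_right _ _
  have hC₀pos : (0:ℝ) < C₀ := by linarith
  set S := {l : ℝ | 0 < l ∧ modular φ μ (fun x => f x / (l : ℂ)) ≤ 1} with hS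
  set S' := {l : ℝ | 0 < l ∧ modular φ μ (fun x => (f ∘ T) x / (l : ℂ)) ≤ 1} with hS'
  have hSne : S.Nonempty := lux_set_nonempty φ μ hf.2
  have key : ∀ l ∈ S, C₀ * l ∈ S' := by
    rintro l ⟨hl, hmod⟩
    refine ⟨by positivity, ?_⟩
    have heq : (fun x => (f ∘ T) x / ((C₀ * l : ℝ) : ℂ)) =
        (fun x => (fun y => f y / (l : ℂ)) x / ((C₀ : ℝ) : ℂ)) ∘ T := by
      funext x
      simp only [Function.comp_apply]
      push_cast
      rw [div_div]
      ring_nf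
    rw [heq]
    have hmeas' : Measurable (fun y => f y / (l : ℂ) / ((C₀ : ℝ) : ℂ)) := by
      have := hf.1
      fun_prop
    calc modular φ μ ((fun x => (fun y => f y / (l : ℂ)) x / ((C₀ : ℝ) : ℂ)) ∘ T)
        ≤ (m : ℝ≥0∞) * modular φ μ (fun x => (fun y => f y / (l : ℂ)) x / ((C₀ : ℝ) : ℂ)) := by
          exact modular_comp_le φ μ T hTm hmap hmeas'
      _ ≤ (m : ℝ≥0∞) * (((C₀.toNNReal⁻¹ : ℝ≥0) : ℝ≥0∞) * modular φ μ (fun y => f y / (l : ℂ))) := by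
          gcongr
          exact modular_div_le φ μ hC₀1 _
      _ ≤ (m : ℝ≥0∞) * (((C₀.toNNReal⁻¹ : ℝ≥0) : ℝ≥0∞) * 1) := by gcongr
      _ ≤ 1 := by
          rw [mul_one, ← ENNReal.coe_mul]
          have : m * C₀.toNNReal⁻¹ ≤ 1 := by
            rw [mul_inv_le_iff₀ (Real.toNNReal_pos.2 hC₀pos), one_mul]
            have : (m : ℝ) ≤ C₀ := le_max_left _ _
            exact_mod_cast Real.le_toNNReal_iff_coe_le (by positivity) |>.2 this
          exact_mod_cast this
  -- conclude on infima
  have hbdd : BddBelow S' := luxNorm_set_bddBelow φ μ _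
  have h1 : ∀ l ∈ S, sInf S' ≤ C₀ * l := fun l hl => csInf_le hbdd (key l hl)
  have h2 : sInf S' / C₀ ≤ sInf S :=
    le_csInf hSne (fun l hl => by
      rw [div_le_iff₀ hC₀pos]
      linarith [h1 l hl, mul_comm C₀ l])
  calc luxNorm φ μ (f ∘ T) = sInf S' := rfl
    _ = sInf S' / C₀ * C₀ := by field_simp
    _ ≤ sInf S * C₀ := by gcongr
    _ = C₀ * luxNorm φ μ f := by rw [mul_comm]; rfl

omit hΔ in
lemma nnnorm_div_coe (v : ℝ≥0) {l : ℝ} (hl : 0 ≤ l) :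
    ‖(((v : ℝ) : ℂ)) / ((l : ℝ) : ℂ)‖₊ = v / l.toNNReal := by
  rw [nnnorm_div]
  congr 1
  · rw [Complex.nnnorm_real, NNReal.nnnorm_eq]
  · rw [Complex.nnnorm_real, Real.nnnorm_of_nonneg hl, Real.toNNReal_of_nonneg hl]

omit hΔ in
lemma modular_ind_div {A : Set Ω} (hA : MeasurableSet A) (v : ℝ≥0) {l : ℝ} (hl : 0 < l) :
    modular φ μ (fun x => A.indicator (fun _ => ((v : ℝ) : ℂ)) x / ((l : ℝ) : ℂ)) =
      φ.toFun (v / l.toNNReal) * μ A := by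
  unfold modular
  have heq : (fun x => φ.toFun ‖A.indicator (fun _ => ((v : ℝ) : ℂ)) x / ((l : ℝ) : ℂ)‖₊) =
      A.indicator (fun _ => φ.toFun (v / l.toNNReal)) := by
    funext x
    by_cases hx : x ∈ A
    · rw [Set.indicator_of_mem hx, Set.indicator_of_mem hx, nnnorm_div_coe v hl.le]
    · rw [Set.indicator_of_notMem hx, Set.indicator_of_notMem hx]
      simp only [zero_div, nnnorm_zero]
      exact φ.zero
  rw [heq]
  exact (lintegral_indicator hA (fun _ => φ.toFun (v / l.toNNReal))).trans
    (setLIntegral_const _ _)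

omit hΔ in
lemma modular_ind_mul {A : Set Ω} (hA : MeasurableSet A) (c v : ℝ≥0) :
    modular φ μ (fun x => (c : ℂ) * A.indicator (fun _ => ((v : ℝ) : ℂ)) x) =
      φ.toFun (c * v) * μ A := by
  unfold modular
  have heq : (fun x => φ.toFun ‖(c : ℂ) * A.indicator (fun _ => ((v : ℝ) : ℂ)) x‖₊) =
      A.indicator (fun _ => φ.toFun (c * v)) := by
    funext x
    by_cases hx : x ∈ A
    · rw [Set.indicator_of_mem hx, Set.indicator_of_mem hx]
      congr 1
      rw [nnnorm_mul, show ((c : ℂ)) = (((c : ℝ)) : ℂ) by norm_cast,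
        Complex.nnnorm_real, NNReal.nnnorm_eq, Complex.nnnorm_real, NNReal.nnnorm_eq]
    · rw [Set.indicator_of_notMem hx, Set.indicator_of_notMem hx]
      simp only [mul_zero, nnnorm_zero]
      exact φ.zero
  rw [heq]
  exact (lintegral_indicator hA (fun _ => φ.toFun (c * v))).trans (setLIntegral_const _ _)

omit hΔ in
lemma memOrlicz_ind (hΔ : ∀ x : ℝ≥0, φ.toFun (2 * x) ≤ (K : ℝ≥0∞) * φ.toFun x)
    {A : Set Ω} (hA : MeasurableSet A) (hAfin : μ A < ⊤) (v : ℝ≥0) :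
    MemOrlicz φ μ (A.indicator fun _ => ((v : ℝ) : ℂ)) := by
  refine ⟨Measurable.indicator measurable_const hA, 1, one_pos, ?_⟩
  rw [show (fun x => ((1 : ℝ≥0) : ℂ) * (A.indicator fun _ => ((v : ℝ) : ℂ)) x) =
      (fun x => ((1 : ℝ≥0) : ℂ) * A.indicator (fun _ => ((v : ℝ) : ℂ)) x) from rfl,
    modular_ind_mul φ μ hA 1 v]
  exact ENNReal.mul_lt_top (finite φ hΔ _) hAfin

section IndNorm

variable {A : Set Ω} {v : ℝ≥0}

omit hΔ in
lemma lux_ind_upper (hΔ : ∀ x : ℝ≥0, φ.toFun (2 * x) ≤ (K : ℝ≥0∞) * φ.toFun x)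
    (hA : MeasurableSet A) (hAfin : μ A < ⊤) {l : ℝ}
    (hl : luxNorm φ μ (A.indicator fun _ => ((v : ℝ) : ℂ)) < l) (hlpos : 0 < l) :
    φ.toFun (v / l.toNNReal) * μ A ≤ 1 := by
  set S := {t : ℝ | 0 < t ∧
    modular φ μ (fun x => (A.indicator fun _ => ((v : ℝ) : ℂ)) x / (t : ℂ)) ≤ 1} with hSdef
  have hSne : S.Nonempty := lux_set_nonempty φ μ (memOrlicz_ind φ μ hΔ hA hAfin v).2
  obtain ⟨l', hl'S, hl'lt⟩ := exists_lt_of_csInf_lt hSne hl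
  obtain ⟨hl'pos, hl'mod⟩ := hl'S
  rw [modular_ind_div φ μ hA v hl'pos] at hl'mod
  have h2 : v / l.toNNReal ≤ v / l'.toNNReal := by
    gcongr
  exact le_trans (mul_le_mul_left (mono φ h2) (μ A)) hl'mod

omit hΔ in
lemma lux_ind_lower (hA : MeasurableSet A) {l : ℝ} (hlpos : 0 < l)
    (hl : l < luxNorm φ μ (A.indicator fun _ => ((v : ℝ) : ℂ))) :
    1 < φ.toFun (v / l.toNNReal) * μ A := by
  by_contra h
  push_neg at h
  have hmem : l ∈ {t : ℝ | 0 < t ∧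
      modular φ μ (fun x => (A.indicator fun _ => ((v : ℝ) : ℂ)) x / (t : ℂ)) ≤ 1} := by
    refine ⟨hlpos, ?_⟩
    rw [modular_ind_div φ μ hA v hlpos]
    exact h
  have := csInf_le (luxNorm_set_bddBelow φ μ _) hmem
  exact absurd this (not_le.2 hl)

end IndNorm

omit hΔ in
lemma lux_ind_pos (hΔ : ∀ x : ℝ≥0, φ.toFun (2 * x) ≤ (K : ℝ≥0∞) * φ.toFun x)
    {A : Set Ω} (hA : MeasurableSet A) (h0 : μ A ≠ 0) (hAfin : μ A < ⊤)
    {v : ℝ≥0} (hv : 0 < v) :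
    0 < luxNorm φ μ (A.indicator fun _ => ((v : ℝ) : ℂ)) := by
  obtain ⟨M, hM⟩ := eventually_big φ (1 / μ A) (ENNReal.div_lt_top ENNReal.one_ne_top h0)
  set w : ℝ≥0 := max M v with hw
  have hwpos : 0 < w := lt_of_lt_of_le hv (le_max_right _ _)
  set l₀ : ℝ := ((v / w : ℝ≥0) : ℝ) with hl₀
  have hl₀pos : 0 < l₀ := by
    rw [hl₀, NNReal.coe_div]
    exact div_pos (by exact_mod_cast hv) (by exact_mod_cast hwpos)
  set S := {t : ℝ | 0 < t ∧
    modular φ μ (fun x => (A.indicator fun _ => ((v : ℝ) : ℂ)) x / (t : ℂ)) ≤ 1} with hSdef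
  have hSne : S.Nonempty := lux_set_nonempty φ μ (memOrlicz_ind φ μ hΔ hA hAfin v).2
  have hlb : ∀ l ∈ S, l₀ ≤ l := by
    rintro l ⟨hlpos, hmod⟩
    by_contra hcon
    push_neg at hcon
    rw [modular_ind_div φ μ hA v hlpos] at hmod
    have hlt : l.toNNReal < v / w := by
      have := (Real.toNNReal_lt_toNNReal_iff hl₀pos).2 hcon
      rwa [Real.toNNReal_coe] at this
    have hge : w ≤ v / l.toNNReal := by
      rw [le_div_iff₀ (Real.toNNReal_pos.2 hlpos)]
      rw [lt_div_iff₀ hwpos] at hlt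
      exact (mul_comm w l.toNNReal ▸ hlt.le)
    have hbig : 1 / μ A < φ.toFun (v / l.toNNReal) :=
      hM _ (le_trans (le_max_left _ _) hge)
    have : 1 < φ.toFun (v / l.toNNReal) * μ A := by
      rwa [ENNReal.div_lt_iff (Or.inl h0) (Or.inl hAfin.ne)] at hbig
    exact absurd hmod (not_le.2 this)
  calc (0:ℝ) < l₀ := hl₀pos
    _ ≤ sInf S := le_csInf hSne hlb

omit hΔ in
lemma sqrt_comp_le {a b a' b' C : ℝ} (ha : 0 ≤ a) (hb : 0 ≤ b) (ha' : 0 ≤ a') (hb' : 0 ≤ b')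
    (hC : 0 ≤ C) (h1 : a' ≤ C * a) (h2 : b' ≤ C * b) :
    Real.sqrt (a' ^ 2 + b' ^ 2) ≤ C * Real.sqrt (a ^ 2 + b ^ 2) := by
  have : Real.sqrt (a' ^ 2 + b' ^ 2) ≤ Real.sqrt (C ^ 2 * (a ^ 2 + b ^ 2)) := by
    apply Real.sqrt_le_sqrt
    nlinarith
  refine this.trans (le_of_eq ?_)
  rw [Real.sqrt_mul (by positivity), Real.sqrt_sq hC]

omit hΔ in
lemma bc_single (g : Ω → ℂ) :
    bcLuxNorm φ μ (g, fun _ => (0 : ℂ)) = (1 / Real.sqrt 2) * luxNorm φ μ g := by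
  unfold bcLuxNorm
  have h2 : luxNorm φ μ (g, fun _ => (0:ℂ)).2 = 0 := luxNorm_zero_fun φ μ
  rw [h2]
  norm_num
  rw [Real.sqrt_sq (luxNorm_nonneg φ μ g)]


end Helpers

/-- For a non-singular measurable transformation `T` of a σ-finite complete measure
space and an Orlicz function `φ` satisfying the `Δ₂` condition, the composition
operator `C_T(f₁, f₂) = (f₁ ∘ T, f₂ ∘ T)` maps `L^φ(𝔹ℂ)` boundedly into itself iff
there is `m > 0` with `μ(T⁻¹(A)) ≤ m·μ(A)` for all `A` of finite measure. -/
theorem bicomplex_orlicz_composition_bounded_iff {Ω : Type*} [MeasurableSpace Ω]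
    (μ : Measure Ω) [SigmaFinite μ] (hμ : μ.IsComplete) (φ : OrliczFun)
    (hΔ₂ : ∃ K : ℝ≥0, 0 < K ∧ ∀ x : ℝ≥0, φ.toFun (2 * x) ≤ (K : ℝ≥0∞) * φ.toFun x)
    (T : Ω → Ω) (hTm : Measurable T)
    (hns : ∀ A : Set Ω, MeasurableSet A → μ A = 0 → μ (T ⁻¹' A) = 0) :
    (∃ C : ℝ, 0 < C ∧ ∀ f₁ f₂ : Ω → ℂ, MemOrlicz φ μ f₁ → MemOrlicz φ μ f₂ →
        MemOrlicz φ μ (f₁ ∘ T) ∧ MemOrlicz φ μ (f₂ ∘ T) ∧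
          bcLuxNorm φ μ (f₁ ∘ T, f₂ ∘ T) ≤ C * bcLuxNorm φ μ (f₁, f₂)) ↔
      (∃ m : ℝ≥0, 0 < m ∧ ∀ A : Set Ω, MeasurableSet A → μ A < ⊤ →
        μ (T ⁻¹' A) ≤ (m : ℝ≥0∞) * μ A) := by

  obtain ⟨K, hK, hΔ⟩ := hΔ₂
  constructor
  · rintro ⟨C, hC, hbound⟩
    set C' : ℝ := max C 1 with hC'def
    have hC'1 : (1:ℝ) ≤ C' := le_max_right _ _
    have hCC' : C ≤ C' := le_max_left _ _
    set c' : ℝ≥0 := C'.toNNReal with hc'def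
    have hc'pos : 0 < c' := Real.toNNReal_pos.2 (by linarith)
    obtain ⟨n, hn⟩ := pow_unbounded_of_one_lt (4 * c') (one_lt_two (α := ℝ≥0))
    refine ⟨K ^ n, pow_pos hK n, ?_⟩
    intro A hA hAfin
    set f : Ω → ℂ := A.indicator (fun _ => (((1:ℝ≥0) : ℝ) : ℂ)) with hfdef
    have hf0 : MemOrlicz φ μ (fun _ => (0:ℂ)) := ⟨measurable_const, 1, one_pos, by
      unfold modular
      simp [φ.zero]⟩
    obtain ⟨hmem1, -, hbc⟩ := hbound f (fun _ => 0) (memOrlicz_ind φ μ hΔ hA hAfin 1) hf0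
    have hcomp : f ∘ T = (T ⁻¹' A).indicator (fun _ => (((1:ℝ≥0) : ℝ) : ℂ)) := by
      funext x
      by_cases hx : T x ∈ A
      · rw [Function.comp_apply, hfdef, Set.indicator_of_mem hx,
          Set.indicator_of_mem (show x ∈ T ⁻¹' A from hx)]
      · rw [Function.comp_apply, hfdef, Set.indicator_of_notMem hx,
          Set.indicator_of_notMem (show x ∉ T ⁻¹' A from hx)]
    have hBmeas : MeasurableSet (T ⁻¹' A) := hTm hA
    obtain ⟨-, c, hcpos, hmodc⟩ := hmem1
    rw [hcomp] at hmodc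
    rw [show (fun x => (c : ℂ) * (T ⁻¹' A).indicator (fun _ => (((1:ℝ≥0) : ℝ) : ℂ)) x) =
      (fun x => (c : ℂ) * ((T ⁻¹' A).indicator (fun _ => (((1:ℝ≥0) : ℝ) : ℂ))) x) from rfl,
      modular_ind_mul φ μ hBmeas c 1] at hmodc
    have hφc : φ.toFun (c * 1) ≠ 0 := (pos φ hΔ (by simpa using hcpos)).ne'
    have hBfin : μ (T ⁻¹' A) < ⊤ := by
      by_contra htop
      push_neg at htop
      rw [top_le_iff.1 htop, ENNReal.mul_top hφc] at hmodc
      exact absurd hmodc (lt_irrefl ⊤)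
    by_cases hA0 : μ A = 0
    · rw [hns A hA hA0]
      exact zero_le
    by_cases hB0 : μ (T ⁻¹' A) = 0
    · rw [hB0]
      exact zero_le
    set a := luxNorm φ μ f with hadef
    set b := luxNorm φ μ ((T ⁻¹' A).indicator (fun _ => (((1:ℝ≥0) : ℝ) : ℂ))) with hbdef
    have ha : 0 < a := lux_ind_pos φ μ hΔ hA hA0 hAfin one_pos
    have hb : 0 < b := lux_ind_pos φ μ hΔ hBmeas hB0 hBfin one_pos
    have hbca : b ≤ C' * a := by
      rw [hcomp, show ((fun _ => (0:ℂ)) ∘ T) = (fun _ => (0:ℂ)) from rfl,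
        bc_single, bc_single] at hbc
      have hs : (0:ℝ) < 1 / Real.sqrt 2 := by positivity
      rw [mul_left_comm] at hbc
      have hbC : b ≤ C * a := le_of_mul_le_mul_left hbc hs
      nlinarith
    set α := a.toNNReal with hα
    set β := b.toNNReal with hβ
    have hαpos : 0 < α := Real.toNNReal_pos.2 ha
    have hβpos : 0 < β := Real.toNNReal_pos.2 hb
    have hβα : β ≤ c' * α := by
      rw [hβ, hα, hc'def, ← Real.toNNReal_mul (by linarith : (0:ℝ) ≤ C')]
      exact Real.toNNReal_mono hbca
    have hupper : φ.toFun (1 / (2 * β)) * μ (T ⁻¹' A) ≤ 1 := by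
      have h2b : (2 * b).toNNReal = 2 * β := by
        rw [hβ, Real.toNNReal_mul (by norm_num : (0:ℝ) ≤ 2), Real.toNNReal_ofNat]
      have := lux_ind_upper φ μ hΔ hBmeas hBfin (show b < 2*b by linarith) (by linarith)
      rwa [h2b, one_div, ← one_div] at this
    have hlower : 1 < φ.toFun (1 / (α / 2)) * μ A := by
      have hhalf : (a / 2).toNNReal = α / 2 := by
        rw [hα, Real.toNNReal_div' (by norm_num : (0:ℝ) ≤ 2)]
        norm_num
      have := lux_ind_lower φ μ hA (half_pos ha) (show a/2 < a by linarith)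
      rwa [hhalf] at this
    have hargs : (1 : ℝ≥0) / (α / 2) ≤ 2 ^ n * (1 / (2 * β)) := by
      have e1 : (1:ℝ≥0)/(α/2) = 2/α := by rw [one_div, inv_div]
      have e2 : (2:ℝ≥0)^n * (1/(2*β)) = 2^n / (2*β) := by rw [mul_one_div]
      rw [e1, e2, div_le_div_iff₀ hαpos (mul_pos two_pos hβpos)]
      calc 2*(2*β) = 4*β := by ring
        _ ≤ 4*(c'*α) := by gcongr
        _ = (4*c')*α := by ring
        _ ≤ 2^n * α := mul_le_mul_left hn.le α
    have hchain : (1:ℝ≥0∞) < (K:ℝ≥0∞)^n * φ.toFun (1/(2*β)) * μ A := by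
      calc (1:ℝ≥0∞) < φ.toFun (1/(α/2)) * μ A := hlower
        _ ≤ φ.toFun (2^n * (1/(2*β))) * μ A := mul_le_mul_left (mono φ hargs) _
        _ ≤ ((K:ℝ≥0∞)^n * φ.toFun (1/(2*β))) * μ A := mul_le_mul_left (pow_bound φ hΔ n _) _
        _ = (K:ℝ≥0∞)^n * φ.toFun (1/(2*β)) * μ A := by ring
    set t := φ.toFun (1/(2*β)) with htdef
    have ht0 : t ≠ 0 := (pos φ hΔ (by
      rw [one_div]
      exact inv_pos.2 (mul_pos two_pos hβpos))).ne'
    have httop : t ≠ ⊤ := (finite φ hΔ _).ne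
    have final : μ (T ⁻¹' A) * t ≤ (((K^n : ℝ≥0)) : ℝ≥0∞) * μ A * t := by
      calc μ (T ⁻¹' A) * t = t * μ (T ⁻¹' A) := mul_comm _ _
        _ ≤ 1 := hupper
        _ ≤ (K:ℝ≥0∞)^n * t * μ A := hchain.le
        _ = (((K^n : ℝ≥0)) : ℝ≥0∞) * μ A * t := by
            push_cast
            ring
    exact (ENNReal.mul_le_mul_iff_left ht0 httop).mp final
  · rintro ⟨m, hm, hmA⟩
    have hmap : μ.map T ≤ ((m : ℝ≥0∞) • μ) := map_le_smul μ T hTm hmA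
    set C₀ : ℝ := max (m : ℝ) 1 with hC₀
    refine ⟨C₀, lt_of_lt_of_le one_pos (le_max_right _ _), fun f₁ f₂ h1 h2 => ⟨memOrlicz_comp φ μ T hTm hmap h1,
      memOrlicz_comp φ μ T hTm hmap h2, ?_⟩⟩
    have e1 : luxNorm φ μ (f₁ ∘ T) ≤ C₀ * luxNorm φ μ f₁ := luxNorm_comp_le φ μ T hTm hm hmap h1
    have e2 : luxNorm φ μ (f₂ ∘ T) ≤ C₀ * luxNorm φ μ f₂ := luxNorm_comp_le φ μ T hTm hm hmap h2
    unfold bcLuxNorm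
    rw [mul_left_comm]
    apply mul_le_mul_of_nonneg_left _ (by positivity)
    exact sqrt_comp_le (luxNorm_nonneg φ μ f₁) (luxNorm_nonneg φ μ f₂)
      (luxNorm_nonneg φ μ _) (luxNorm_nonneg φ μ _)
      (le_trans zero_le_one (le_max_right _ _)) e1 e2
end
end
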